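/- arXiv:1309.6760 — 4 statements merged into one kernel-verified Lean document; each statement's English description precedes it below -/
import Mathlib

section
/- Let (M, ω) be a symplectic manifold with a Hamiltonian G-action with momentum map μ. Let {(−,−)_m}_{m∈M} be a smooth family of inner products on 𝔤*, and define ℋ(m) = ‖μ(m)‖²_m. Let d₁ℋ be the partial derivative of the function (m, m') ↦ ‖μ(m)‖²_{m'} in the first variable, and let X₁^ℋ be the vector field defined by d₁ℋ = ω(X₁^ℋ, −). Let μ* : M → 𝔤 be defined by (μ(m), ξ)_m = ⟨ξ, μ*(m)⟩ for all ξ ∈ 𝔤*, and V_μ the vector field V_μ(m) = (μ*(m))^M_m. Then X₁^ℋ = 2 V_μ. -/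
open Manifold

/-- Let `(M, ω)` be a symplectic manifold with a Hamiltonian `G`-action with
momentum map `μ`, and let `{(−,−)_m}` be a smooth family of inner products on `𝔤*`.  Here
`𝔤 = E'` is the Lie algebra of `G` (identified with its model space) and `𝔤* = W` is its dual,
given with the duality pairing `pair : W →L (E' →L ℝ)`.  Set `ℋ(m) = ‖μ(m)‖²_m`, let `d₁ℋ`
be the partial derivative of `(m, m') ↦ ‖μ(m)‖²_{m'}` in the first variable, and let `X₁^ℋ`
be the vector field defined by `d₁ℋ = ω(X₁^ℋ, −)`.  Let `μ* : M → 𝔤` be defined by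
`(μ(m), ξ)_m = ⟨ξ, μ*(m)⟩` for all `ξ ∈ 𝔤*`, and `V_μ(m) = (μ*(m))^M_m`.
Then `X₁^ℋ = 2 V_μ`. -/
theorem statement2
    {E : Type*} [NormedAddCommGroup E] [NormedSpace ℝ E]
    {H : Type*} [TopologicalSpace H] (I : ModelWithCorners ℝ E H)
    {M : Type*} [TopologicalSpace M] [ChartedSpace H M] [IsManifold I (⊤ : ℕ∞) M]
    {E' : Type*} [NormedAddCommGroup E'] [NormedSpace ℝ E']
    {H' : Type*} [TopologicalSpace H'] (I' : ModelWithCorners ℝ E' H')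
    {G : Type*} [TopologicalSpace G] [ChartedSpace H' G] [Group G] [LieGroup I' (⊤ : ℕ∞) G]
    [MulAction G M]
    (hact : ContMDiff (I'.prod I) I (⊤ : ℕ∞) (fun p : G × M => p.1 • p.2))
    -- 𝔤* with its duality pairing with 𝔤 = E'
    {W : Type*} [NormedAddCommGroup W] [NormedSpace ℝ W]
    (pair : W →L[ℝ] E' →L[ℝ] ℝ)
    (hpair : Function.Injective pair)
    -- the symplectic form
    (ω : ∀ m : M, TangentSpace I m →L[ℝ] TangentSpace I m →L[ℝ] ℝ)
    (hanti : ∀ (m : M) (v w : TangentSpace I m), ω m v w = - ω m w v)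
    (hnondeg : ∀ (m : M) (v : TangentSpace I m), (∀ w, ω m v w = 0) → v = 0)
    -- the momentum map and the momentum map condition dμ_X = ω(X^M, −)
    (μ : M → W)
    (hμsmooth : ContMDiff I 𝓘(ℝ, W) (⊤ : ℕ∞) μ)
    (hmom : ∀ (X : E') (m : M) (v : TangentSpace I m),
      mfderiv I 𝓘(ℝ, ℝ) (fun m' => pair (μ m') X) m v
        = ω m (mfderiv I' I (fun g : G => g • m) 1 X) v)
    -- a smooth family of inner products on 𝔤* = W, parametrized by M
    (inn : M → (W →L[ℝ] W →L[ℝ] ℝ))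
    (hinnsmooth : ContMDiff I 𝓘(ℝ, W →L[ℝ] W →L[ℝ] ℝ) (⊤ : ℕ∞) inn)
    (hsymm : ∀ (m : M) (ξ η : W), inn m ξ η = inn m η ξ)
    (hposdef : ∀ (m : M) (ξ : W), ξ ≠ 0 → 0 < inn m ξ ξ)
    -- the pointwise dual μ* of μ with respect to the family of inner products
    (μstar : M → E')
    (hμstar : ∀ (m : M) (ξ : W), inn m (μ m) ξ = pair ξ (μstar m))
    -- the vector field X₁^ℋ, defined by d₁ℋ = ω(X₁^ℋ, −), where
    -- (d₁ℋ)_m is the differential at m of m' ↦ ‖μ(m')‖²_m = (μ(m'), μ(m'))_m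
    (X₁ : ∀ m : M, TangentSpace I m)
    (hX₁ : ∀ (m : M) (v : TangentSpace I m),
      mfderiv I 𝓘(ℝ, ℝ) (fun m' => inn m (μ m') (μ m')) m v = ω m (X₁ m) v) :
    -- conclusion: X₁^ℋ = 2 V_μ, where V_μ(m) = (μ*(m))^M_m
    ∀ m : M, X₁ m = (2 : ℝ) • mfderiv I' I (fun g : G => g • m) 1 (μstar m) := by

  intro m
  set dμ : TangentSpace I m →L[ℝ] W := mfderiv I 𝓘(ℝ, W) μ m with hdμdef
  have hμd : MDifferentiableAt I 𝓘(ℝ, W) μ m :=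
    (hμsmooth m).mdifferentiableAt (by simp)
  have hdμ : HasMFDerivAt I 𝓘(ℝ, W) μ m dμ := hμd.hasMFDerivAt
  set A : TangentSpace I m := mfderiv I' I (fun g : G => g • m) 1 (μstar m) with hA
  -- derivative of the linear part m' ↦ pair (μ m') (μstar m)
  have hlin : ∀ v : TangentSpace I m,
      mfderiv I 𝓘(ℝ, ℝ) (fun m' => pair (μ m') (μstar m)) m v
        = pair (dμ v) (μstar m) := by
    intro v
    have h1 : HasMFDerivAt I 𝓘(ℝ, ℝ) (fun m' => pair (μ m') (μstar m)) m
        ((pair.flip (μstar m)).comp dμ) := by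
      have := ((pair.flip (μstar m)).hasFDerivAt (x := μ m)).hasMFDerivAt.comp m hdμ
      exact this
    rw [h1.mfderiv]
    rfl
  -- derivative of the quadratic part m' ↦ inn m (μ m') (μ m')
  have hquad : ∀ v : TangentSpace I m,
      mfderiv I 𝓘(ℝ, ℝ) (fun m' => inn m (μ m') (μ m')) m v
        = inn m (μ m) (dμ v) + inn m (dμ v) (μ m) := by
    intro v
    have hc : HasFDerivAt (fun w : W => inn m w) (inn m) (μ m) :=
      (inn m).hasFDerivAt
    have hF := hc.clm_apply (hasFDerivAt_id (μ m))
    have h1 : HasMFDerivAt I 𝓘(ℝ, ℝ) (fun m' => inn m (μ m') (μ m')) m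
        (((inn m (μ m)).comp (ContinuousLinearMap.id ℝ W)
          + ((inn m).flip (μ m)).comp (ContinuousLinearMap.id ℝ W)).comp dμ) := by
      have := hF.hasMFDerivAt.comp m hdμ
      convert this using 2
      exact Iff.rfl
    rw [h1.mfderiv]
    rfl
  -- combine: ω m (X₁ m) v = 2 * ω m A v for all v
  have key : ∀ v : TangentSpace I m, ω m (X₁ m) v = 2 * ω m A v := by
    intro v
    have h1 := hX₁ m v
    rw [hquad v] at h1
    have h2 := hmom (μstar m) m v
    rw [hlin v] at h2
    have h3 : inn m (μ m) (dμ v) = pair (dμ v) (μstar m) := hμstar m (dμ v)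
    have h4 : inn m (dμ v) (μ m) = inn m (μ m) (dμ v) := hsymm m _ _
    rw [h4, h3, h2] at h1
    rw [← h1, ← hA]
    ring
  have hzero : ∀ v : TangentSpace I m, ω m (X₁ m - (2 : ℝ) • A) v = 0 := by
    intro v
    have hk := key v
    simp only [map_sub, map_smul, ContinuousLinearMap.sub_apply,
      ContinuousLinearMap.smul_apply, smul_eq_mul, hk]
    ring
  have := hnondeg m _ hzero
  have h := sub_eq_zero.mp this
  exact h
end

section
/- In the setting of a Hamiltonian G-action on (M, ω) with momentum map μ and a G-equivariant family of inner products on 𝔤* defining ℋ(m) = ‖μ(m)‖²_m, write dℋ = d₁ℋ + d₂ℋ and X^ℋ = X₁^ℋ + X₂^ℋ for the corresponding decomposition of the Hamiltonian vector field. Then for every m ∈ M, with ξ := μ(m), one has T_mμ(X₂^ℋ(m)) = −2 ad*(μ*(m)) ξ, which is tangent to the coadjoint orbit through ξ. In particular if ξ is a regular value of μ and 𝒪 = Ad*(G)ξ, then X₂^ℋ(m) ∈ T_m(μ^{-1}(𝒪)). -/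
open Manifold

/-- Hamiltonian `G`-action on `(M, ω)` with equivariant momentum map `μ` and a
`G`-equivariant family of inner products on `𝔤*`, defining `ℋ(m) = ‖μ(m)‖²_m`.  Writing
`dℋ = d₁ℋ + d₂ℋ` and `X^ℋ = X₁^ℋ + X₂^ℋ` for the corresponding decomposition of the
Hamiltonian vector field, one has, for every `m` and `ξ := μ(m)`:
`T_mμ(X₂^ℋ(m)) = −2 ad*(μ*(m)) ξ`, which is tangent to the coadjoint orbit through `ξ`
(here `ad*(X)ξ` is the derivative at `1 ∈ G` of `g ↦ Ad*(g)ξ` in the direction `X`, and the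
tangent space at `ξ` to the coadjoint orbit is `{ad*(X)ξ : X ∈ 𝔤}`).  In particular, under
their identification `T_m(μ⁻¹(𝒪)) = (T_mμ)⁻¹(T_ξ𝒪)`, if `ξ` is a regular value of `μ` then
`X₂^ℋ(m) ∈ T_m(μ⁻¹(𝒪))`, i.e. `T_mμ(X₂^ℋ(m)) ∈ T_ξ𝒪`. -/
theorem statement3
    {E : Type*} [NormedAddCommGroup E] [NormedSpace ℝ E]
    {H : Type*} [TopologicalSpace H] (I : ModelWithCorners ℝ E H)
    {M : Type*} [TopologicalSpace M] [ChartedSpace H M] [IsManifold I (⊤ : ℕ∞) M]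
    {E' : Type*} [NormedAddCommGroup E'] [NormedSpace ℝ E']
    {H' : Type*} [TopologicalSpace H'] (I' : ModelWithCorners ℝ E' H')
    {G : Type*} [TopologicalSpace G] [ChartedSpace H' G] [Group G] [LieGroup I' (⊤ : ℕ∞) G]
    [MulAction G M]
    (hact : ContMDiff (I'.prod I) I (⊤ : ℕ∞) (fun p : G × M => p.1 • p.2))
    -- 𝔤* with its duality pairing with 𝔤 = E'
    {W : Type*} [NormedAddCommGroup W] [NormedSpace ℝ W]
    (pair : W →L[ℝ] E' →L[ℝ] ℝ)
    (hpair : Function.Injective pair)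
    -- the coadjoint action Ad* of G on 𝔤* = W
    (coAd : G → W →L[ℝ] W)
    (hcoAd_one : coAd 1 = ContinuousLinearMap.id ℝ W)
    (hcoAd_mul : ∀ g g' : G, coAd (g * g') = (coAd g).comp (coAd g'))
    (hcoAdsmooth : ContMDiff (I'.prod 𝓘(ℝ, W)) 𝓘(ℝ, W) (⊤ : ℕ∞) (fun p : G × W => coAd p.1 p.2))
    -- the symplectic form
    (ω : ∀ m : M, TangentSpace I m →L[ℝ] TangentSpace I m →L[ℝ] ℝ)
    (hanti : ∀ (m : M) (v w : TangentSpace I m), ω m v w = - ω m w v)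
    (hnondeg : ∀ (m : M) (v : TangentSpace I m), (∀ w, ω m v w = 0) → v = 0)
    -- the momentum map: smooth, equivariant, satisfying dμ_X = ω(X^M, −)
    (μ : M → W)
    (hμsmooth : ContMDiff I 𝓘(ℝ, W) (⊤ : ℕ∞) μ)
    (hμequiv : ∀ (g : G) (m : M), μ (g • m) = coAd g (μ m))
    (hmom : ∀ (X : E') (m : M) (v : TangentSpace I m),
      mfderiv I 𝓘(ℝ, ℝ) (fun m' => pair (μ m') X) m v
        = ω m (mfderiv I' I (fun g : G => g • m) 1 X) v)
    -- a smooth G-equivariant family of inner products on 𝔤* = W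
    (inn : M → (W →L[ℝ] W →L[ℝ] ℝ))
    (hinnsmooth : ContMDiff I 𝓘(ℝ, W →L[ℝ] W →L[ℝ] ℝ) (⊤ : ℕ∞) inn)
    (hsymm : ∀ (m : M) (ξ η : W), inn m ξ η = inn m η ξ)
    (hposdef : ∀ (m : M) (ξ : W), ξ ≠ 0 → 0 < inn m ξ ξ)
    (hequivar : ∀ (g : G) (m : M) (ξ η : W),
      inn (g • m) (coAd g ξ) (coAd g η) = inn m ξ η)
    -- the pointwise dual μ* of μ with respect to the family of inner products
    (μstar : M → E')
    (hμstar : ∀ (m : M) (ξ : W), inn m (μ m) ξ = pair ξ (μstar m))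
    -- the vector field X₂^ℋ, defined by d₂ℋ = ω(X₂^ℋ, −), where
    -- (d₂ℋ)_m is the differential at m of m' ↦ ‖μ(m)‖²_{m'} = (μ(m), μ(m))_{m'}
    (X₂ : ∀ m : M, TangentSpace I m)
    (hX₂ : ∀ (m : M) (v : TangentSpace I m),
      mfderiv I 𝓘(ℝ, ℝ) (fun m' => inn m' (μ m) (μ m)) m v = ω m (X₂ m) v) :
    ∀ m : M,
      -- T_mμ(X₂^ℋ(m)) = −2 ad*(μ*(m)) (μ m), where ad*(X)ξ = T₁(g ↦ Ad*(g)ξ)(X) ...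
      mfderiv I 𝓘(ℝ, W) μ m (X₂ m)
          = (-2 : ℝ) • mfderiv I' 𝓘(ℝ, W) (fun g : G => coAd g (μ m)) 1 (μstar m)
      -- ... which lies in the tangent space {ad*(X)(μ m) : X ∈ 𝔤} at μ(m) to the coadjoint
      -- orbit through μ(m); in particular (if μ(m) is a regular value of μ, under the
      -- identification T_m(μ⁻¹𝒪) = (T_mμ)⁻¹(T_{μ(m)}𝒪)) X₂^ℋ(m) is tangent to μ⁻¹(𝒪).
      ∧ mfderiv I 𝓘(ℝ, W) μ m (X₂ m)
          ∈ Set.range (fun X : E' => mfderiv I' 𝓘(ℝ, W) (fun g : G => coAd g (μ m)) 1 X) := by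
  intro m
  -- basic differentiability facts
  have hμd : MDifferentiableAt I 𝓘(ℝ, W) μ m := hμsmooth.mdifferentiableAt (by simp)
  have hactsm : ContMDiff I' I (⊤ : ℕ∞) (fun g : G => g • m) :=
    hact.comp (contMDiff_id.prodMk contMDiff_const)
  have hactd : MDifferentiableAt I' I (fun g : G => g • m) 1 :=
    hactsm.mdifferentiableAt (by simp)
  have hact1 : (fun g : G => g • m) 1 = m := one_smul G m
  have hcsm : ContMDiff I' 𝓘(ℝ, W) (⊤ : ℕ∞) (fun g : G => coAd g (μ m)) :=
    hcoAdsmooth.comp (contMDiff_id.prodMk contMDiff_const)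
  have hcd : MDifferentiableAt I' 𝓘(ℝ, W) (fun g : G => coAd g (μ m)) 1 :=
    hcsm.mdifferentiableAt (by simp)
  -- key1 : reformulation of the momentum map property in terms of `mfderiv μ`
  have key1 : ∀ (X : E') (v : TangentSpace I m),
      pair (mfderiv I 𝓘(ℝ, W) μ m v) X
        = ω m (mfderiv I' I (fun g : G => g • m) 1 X) v := by
    intro X v
    have hL : HasMFDerivAt I 𝓘(ℝ, ℝ) ((pair.flip X) ∘ μ) m
        ((pair.flip X).comp (mfderiv I 𝓘(ℝ, W) μ m)) :=
      HasMFDerivAt.comp m ((pair.flip X).hasMFDerivAt) hμd.hasMFDerivAt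
    have h0 := hmom X m v
    have heq : (fun m' => pair (μ m') X) = (pair.flip X) ∘ μ := rfl
    rw [heq, hL.mfderiv] at h0
    exact h0 ▸ rfl
  -- keyA : pairing of the infinitesimal coadjoint action against 𝔤, via equivariance of μ
  have keyA : ∀ X Y : E',
      pair (mfderiv I' 𝓘(ℝ, W) (fun g : G => coAd g (μ m)) 1 Y) X
        = ω m (mfderiv I' I (fun g : G => g • m) 1 X)
            (mfderiv I' I (fun g : G => g • m) 1 Y) := by
    intro X Y
    -- the common function
    have hfun : ((pair.flip X) ∘ μ) ∘ (fun g : G => g • m)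
        = (pair.flip X) ∘ (fun g : G => coAd g (μ m)) := by
      funext g
      show pair (μ (g • m)) X = pair (coAd g (μ m)) X
      rw [hμequiv]
    have hμd1 : HasMFDerivAt I 𝓘(ℝ, ℝ) ((pair.flip X) ∘ μ) ((fun g : G => g • m) 1)
        ((pair.flip X).comp (mfderiv I 𝓘(ℝ, W) μ m)) := by
      rw [hact1]
      exact HasMFDerivAt.comp m ((pair.flip X).hasMFDerivAt) hμd.hasMFDerivAt
    have hL : HasMFDerivAt I' 𝓘(ℝ, ℝ) (((pair.flip X) ∘ μ) ∘ (fun g : G => g • m)) 1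
        (((pair.flip X).comp (mfderiv I 𝓘(ℝ, W) μ m)).comp
          (mfderiv I' I (fun g : G => g • m) 1)) :=
      HasMFDerivAt.comp 1 hμd1 hactd.hasMFDerivAt
    have hR : HasMFDerivAt I' 𝓘(ℝ, ℝ) ((pair.flip X) ∘ (fun g : G => coAd g (μ m))) 1
        ((pair.flip X).comp (mfderiv I' 𝓘(ℝ, W) (fun g : G => coAd g (μ m)) 1)) :=
      HasMFDerivAt.comp 1 ((pair.flip X).hasMFDerivAt) hcd.hasMFDerivAt
    have hL' := hL.mfderiv
    rw [hfun, hR.mfderiv] at hL'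
    have := congrFun (congrArg (fun (L : TangentSpace I' (1 : G) →L[ℝ] ℝ) => (L : _ → _)) hL') Y
    change pair (mfderiv I' 𝓘(ℝ, W) (fun g : G => coAd g (μ m)) 1 Y) X
        = pair (mfderiv I 𝓘(ℝ, W) μ m (mfderiv I' I (fun g : G => g • m) 1 Y)) X at this
    have h2 : pair (mfderiv I 𝓘(ℝ, W) μ m (mfderiv I' I (fun g : G => g • m) 1 Y)) X
        = pair (mfderiv I' 𝓘(ℝ, W) (fun g : G => coAd g (μ m)) 1 Y) X := this.symm
    rw [← h2]
    exact key1 X _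
  -- keyC : differentiating the invariance of the inner products
  have keyC : ∀ X : E',
      ω m (X₂ m) (mfderiv I' I (fun g : G => g • m) 1 X)
        + 2 * pair (mfderiv I' 𝓘(ℝ, W) (fun g : G => coAd g (μ m)) 1 X) (μstar m) = 0 := by
    intro X
    set Ψ : G × G → ℝ := fun p => inn (p.1 • m) (coAd p.2 (μ m)) (coAd p.2 (μ m)) with hΨdef
    have hF : ContMDiff (I'.prod I') 𝓘(ℝ, W →L[ℝ] W →L[ℝ] ℝ) (⊤ : ℕ∞)
        (fun p : G × G => inn (p.1 • m)) :=
      hinnsmooth.comp (hact.comp (contMDiff_fst.prodMk contMDiff_const))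
    have hC2 : ContMDiff (I'.prod I') 𝓘(ℝ, W) (⊤ : ℕ∞) (fun p : G × G => coAd p.2 (μ m)) :=
      hcoAdsmooth.comp (contMDiff_snd.prodMk contMDiff_const)
    have hΨsm : ContMDiff (I'.prod I') 𝓘(ℝ, ℝ) (⊤ : ℕ∞) Ψ := (hF.clm_apply hC2).clm_apply hC2
    have hΨd : MDifferentiableAt (I'.prod I') 𝓘(ℝ, ℝ) Ψ (1, 1) :=
      hΨsm.mdifferentiableAt (by simp)
    have hdiagd : MDifferentiableAt I' (I'.prod I') (fun g : G => (g, g)) 1 :=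
      mdifferentiableAt_id.prodMk mdifferentiableAt_id
    -- the composed function is constant
    have hK0 : mfderiv I' 𝓘(ℝ, ℝ) (Ψ ∘ (fun g : G => (g, g))) 1 = 0 := by
      have hconst : (Ψ ∘ (fun g : G => (g, g))) = fun _ : G => inn m (μ m) (μ m) := by
        funext g
        exact hequivar g m (μ m) (μ m)
      rw [hconst]
      exact mfderiv_const
    have hK1 : mfderiv I' 𝓘(ℝ, ℝ) (Ψ ∘ (fun g : G => (g, g))) 1
        = (mfderiv (I'.prod I') 𝓘(ℝ, ℝ) Ψ (1, 1)).comp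
            (mfderiv I' (I'.prod I') (fun g : G => (g, g)) 1) :=
      mfderiv_comp 1 hΨd hdiagd
    -- derivative of the diagonal
    have hid : mfderiv I' I' (fun g : G => g) 1
        = ContinuousLinearMap.id ℝ (TangentSpace I' (1 : G)) := mfderiv_id
    have hdiagD : mfderiv I' (I'.prod I') (fun g : G => (g, g)) 1
        = (mfderiv I' I' (fun g : G => g) 1).prod (mfderiv I' I' (fun g : G => g) 1) :=
      MDifferentiableAt.mfderiv_prod mdifferentiableAt_id mdifferentiableAt_id
    have hdiagX : mfderiv I' (I'.prod I') (fun g : G => (g, g)) 1 X = (X, X) := by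
      rw [hdiagD, hid]
      rfl
    -- total derivative = sum of partial derivatives
    have h5 : mfderiv (I'.prod I') 𝓘(ℝ, ℝ) Ψ (1, 1)
          ((X, X) : TangentSpace (I'.prod I') ((1 : G), (1 : G)))
        = mfderiv I' 𝓘(ℝ, ℝ) (fun z : G => Ψ (z, 1)) 1 X
          + mfderiv I' 𝓘(ℝ, ℝ) (fun z : G => Ψ (1, z)) 1 X :=
      mfderiv_prod_eq_add_apply hΨd
    -- first partial derivative
    have hinnd : MDifferentiableAt I 𝓘(ℝ, ℝ) (fun m' => inn m' (μ m) (μ m)) m :=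
      (((hinnsmooth.mdifferentiableAt (by simp)).clm_apply
        mdifferentiableAt_const).clm_apply mdifferentiableAt_const)
    have hP1eq : (fun z : G => Ψ (z, 1))
        = (fun m' => inn m' (μ m) (μ m)) ∘ (fun g : G => g • m) := by
      funext z
      show inn (z • m) (coAd 1 (μ m)) (coAd 1 (μ m)) = inn (z • m) (μ m) (μ m)
      rw [hcoAd_one]
      rfl
    have hinn1 : HasMFDerivAt I 𝓘(ℝ, ℝ) (fun m' => inn m' (μ m) (μ m))
        ((fun g : G => g • m) 1)
        (mfderiv I 𝓘(ℝ, ℝ) (fun m' => inn m' (μ m) (μ m)) m) := by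
      rw [hact1]
      exact hinnd.hasMFDerivAt
    have hP1 : mfderiv I' 𝓘(ℝ, ℝ) (fun z : G => Ψ (z, 1)) 1 X
        = ω m (X₂ m) (mfderiv I' I (fun g : G => g • m) 1 X) := by
      have hP1' : HasMFDerivAt I' 𝓘(ℝ, ℝ)
          ((fun m' => inn m' (μ m) (μ m)) ∘ (fun g : G => g • m)) 1
          ((mfderiv I 𝓘(ℝ, ℝ) (fun m' => inn m' (μ m) (μ m)) m).comp
            (mfderiv I' I (fun g : G => g • m) 1)) :=
        HasMFDerivAt.comp 1 hinn1 hactd.hasMFDerivAt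
      rw [hP1eq, hP1'.mfderiv]
      show mfderiv I 𝓘(ℝ, ℝ) (fun m' => inn m' (μ m) (μ m)) m
          (mfderiv I' I (fun g : G => g • m) 1 X) = _
      exact hX₂ m _
    -- second partial derivative
    have hP2eq : (fun z : G => Ψ (1, z))
        = (fun w : W => inn m w w) ∘ (fun g : G => coAd g (μ m)) := by
      funext z
      show inn ((1 : G) • m) (coAd z (μ m)) (coAd z (μ m))
          = inn m (coAd z (μ m)) (coAd z (μ m))
      rw [one_smul]
    have hq : HasFDerivAt (fun w : W => inn m w w)
        ((inn m (μ m)).comp (ContinuousLinearMap.id ℝ W)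
          + (inn m).flip (μ m)) (μ m) :=
      HasFDerivAt.clm_apply (inn m).hasFDerivAt (hasFDerivAt_id (μ m))
    have hc1 : (fun g : G => coAd g (μ m)) 1 = μ m := by
      show coAd 1 (μ m) = μ m
      rw [hcoAd_one]
      rfl
    have hq1 : HasMFDerivAt 𝓘(ℝ, W) 𝓘(ℝ, ℝ) (fun w : W => inn m w w)
        ((fun g : G => coAd g (μ m)) 1)
        ((inn m (μ m)).comp (ContinuousLinearMap.id ℝ W) + (inn m).flip (μ m)) := by
      rw [hc1]
      exact hq.hasMFDerivAt
    have hP2 : mfderiv I' 𝓘(ℝ, ℝ) (fun z : G => Ψ (1, z)) 1 X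
        = 2 * pair (mfderiv I' 𝓘(ℝ, W) (fun g : G => coAd g (μ m)) 1 X) (μstar m) := by
      have hP2' : HasMFDerivAt I' 𝓘(ℝ, ℝ)
          ((fun w : W => inn m w w) ∘ (fun g : G => coAd g (μ m))) 1
          (((inn m (μ m)).comp (ContinuousLinearMap.id ℝ W)
            + (inn m).flip (μ m)).comp
              (mfderiv I' 𝓘(ℝ, W) (fun g : G => coAd g (μ m)) 1)) :=
        HasMFDerivAt.comp 1 hq1 hcd.hasMFDerivAt
      rw [hP2eq, hP2'.mfderiv]
      show inn m (μ m) (mfderiv I' 𝓘(ℝ, W) (fun g : G => coAd g (μ m)) 1 X)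
          + inn m (mfderiv I' 𝓘(ℝ, W) (fun g : G => coAd g (μ m)) 1 X) (μ m) = _
      rw [hsymm m (mfderiv I' 𝓘(ℝ, W) (fun g : G => coAd g (μ m)) 1 X) (μ m),
        hμstar m (mfderiv I' 𝓘(ℝ, W) (fun g : G => coAd g (μ m)) 1 X)]
      exact (two_mul _).symm
    -- put everything together
    have hz : (0 : ℝ) = mfderiv I' 𝓘(ℝ, ℝ) (fun z : G => Ψ (z, 1)) 1 X
        + mfderiv I' 𝓘(ℝ, ℝ) (fun z : G => Ψ (1, z)) 1 X := by
      rw [← h5, ← hdiagX]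
      have := congrFun (congrArg (fun (L : TangentSpace I' (1 : G) →L[ℝ] ℝ) => (L : _ → _))
        (hK0.symm.trans hK1)) X
      exact this
    rw [hP1, hP2] at hz
    exact hz.symm
  -- the main pairing identity
  have main : ∀ X : E',
      pair (mfderiv I 𝓘(ℝ, W) μ m (X₂ m)) X
        = pair ((-2 : ℝ) • mfderiv I' 𝓘(ℝ, W) (fun g : G => coAd g (μ m)) 1 (μstar m)) X := by
    intro X
    have h1 : pair (mfderiv I 𝓘(ℝ, W) μ m (X₂ m)) X
        = ω m (mfderiv I' I (fun g : G => g • m) 1 X) (X₂ m) := key1 X (X₂ m)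
    have h2 := hanti m (mfderiv I' I (fun g : G => g • m) 1 X) (X₂ m)
    have h3 := keyC X
    have h4 := keyA (μstar m) X
    have h5 := keyA X (μstar m)
    have h6 := hanti m (mfderiv I' I (fun g : G => g • m) 1 X)
      (mfderiv I' I (fun g : G => g • m) 1 (μstar m))
    have h7 : pair ((-2 : ℝ) • mfderiv I' 𝓘(ℝ, W) (fun g : G => coAd g (μ m)) 1 (μstar m)) X
        = (-2 : ℝ) * pair (mfderiv I' 𝓘(ℝ, W) (fun g : G => coAd g (μ m)) 1 (μstar m)) X := by
      exact congrArg (fun f : E' →L[ℝ] ℝ => f X)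
        (pair.map_smul (-2 : ℝ) (mfderiv I' 𝓘(ℝ, W) (fun g : G => coAd g (μ m)) 1 (μstar m)))
    rw [h1, h2, h7, h5, h6]
    linarith
  have firstEq : mfderiv I 𝓘(ℝ, W) μ m (X₂ m)
      = (-2 : ℝ) • mfderiv I' 𝓘(ℝ, W) (fun g : G => coAd g (μ m)) 1 (μstar m) :=
    hpair (ContinuousLinearMap.ext main)
  refine ⟨firstEq, ⟨(-2 : ℝ) • μstar m, ?_⟩⟩
  show mfderiv I' 𝓘(ℝ, W) (fun g : G => coAd g (μ m)) 1 ((-2 : ℝ) • μstar m)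
      = mfderiv I 𝓘(ℝ, W) μ m (X₂ m)
  exact ((mfderiv I' 𝓘(ℝ, W) (fun g : G => coAd g (μ m)) 1).map_smul (-2 : ℝ) (μstar m)).trans
    firstEq.symm
end

section
/- With a G-equivariant family of inner products on 𝔤* and ℋ(m) = ‖μ(m)‖²_m, the critical set Crit₁(ℋ) of the one-form d₁ℋ equals {m ∈ M : μ*(m) ∈ 𝔤_m}, where 𝔤_m is the stabilizer subalgebra of m. In particular μ^{-1}(0) ∪ M^G ⊆ Crit₁(ℋ). -/
open Manifold

/-- With a `G`-equivariant family of inner products on `𝔤*` and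
`ℋ(m) = ‖μ(m)‖²_m`, the critical set `Crit₁(ℋ)` — the zero set of the vector field `X₁^ℋ`
defined by `d₁ℋ = ω(X₁^ℋ, −)` — equals `{m ∈ M : μ*(m) ∈ 𝔤_m}`, where
`𝔤_m = {X ∈ 𝔤 : X^M_m = 0}` is the stabilizer subalgebra of `m`.  In particular
`μ⁻¹(0) ∪ M^G ⊆ Crit₁(ℋ)`, where `M^G` is the fixed-point set of the action. -/
theorem statement5
    {E : Type*} [NormedAddCommGroup E] [NormedSpace ℝ E]
    {H : Type*} [TopologicalSpace H] (I : ModelWithCorners ℝ E H)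
    {M : Type*} [TopologicalSpace M] [ChartedSpace H M] [IsManifold I (⊤ : ℕ∞) M]
    {E' : Type*} [NormedAddCommGroup E'] [NormedSpace ℝ E']
    {H' : Type*} [TopologicalSpace H'] (I' : ModelWithCorners ℝ E' H')
    {G : Type*} [TopologicalSpace G] [ChartedSpace H' G] [Group G] [LieGroup I' (⊤ : ℕ∞) G]
    [MulAction G M]
    (hact : ContMDiff (I'.prod I) I (⊤ : ℕ∞) (fun p : G × M => p.1 • p.2))
    -- 𝔤* with its (nondegenerate) duality pairing with 𝔤 = E'
    {W : Type*} [NormedAddCommGroup W] [NormedSpace ℝ W]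
    (pair : W →L[ℝ] E' →L[ℝ] ℝ)
    (hpair : Function.Injective pair)
    (hpair' : ∀ X : E', (∀ ξ : W, pair ξ X = 0) → X = 0)
    -- the coadjoint action Ad* of G on 𝔤* = W
    (coAd : G → W →L[ℝ] W)
    (hcoAd_one : coAd 1 = ContinuousLinearMap.id ℝ W)
    (hcoAd_mul : ∀ g g' : G, coAd (g * g') = (coAd g).comp (coAd g'))
    (hcoAdsmooth : ContMDiff (I'.prod 𝓘(ℝ, W)) 𝓘(ℝ, W) (⊤ : ℕ∞) (fun p : G × W => coAd p.1 p.2))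
    -- the symplectic form
    (ω : ∀ m : M, TangentSpace I m →L[ℝ] TangentSpace I m →L[ℝ] ℝ)
    (hanti : ∀ (m : M) (v w : TangentSpace I m), ω m v w = - ω m w v)
    (hnondeg : ∀ (m : M) (v : TangentSpace I m), (∀ w, ω m v w = 0) → v = 0)
    -- the momentum map: smooth, equivariant, satisfying dμ_X = ω(X^M, −)
    (μ : M → W)
    (hμsmooth : ContMDiff I 𝓘(ℝ, W) (⊤ : ℕ∞) μ)
    (hμequiv : ∀ (g : G) (m : M), μ (g • m) = coAd g (μ m))
    (hmom : ∀ (X : E') (m : M) (v : TangentSpace I m),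
      mfderiv I 𝓘(ℝ, ℝ) (fun m' => pair (μ m') X) m v
        = ω m (mfderiv I' I (fun g : G => g • m) 1 X) v)
    -- a smooth G-equivariant family of inner products on 𝔤* = W
    (inn : M → (W →L[ℝ] W →L[ℝ] ℝ))
    (hinnsmooth : ContMDiff I 𝓘(ℝ, W →L[ℝ] W →L[ℝ] ℝ) (⊤ : ℕ∞) inn)
    (hsymm : ∀ (m : M) (ξ η : W), inn m ξ η = inn m η ξ)
    (hposdef : ∀ (m : M) (ξ : W), ξ ≠ 0 → 0 < inn m ξ ξ)
    (hequivar : ∀ (g : G) (m : M) (ξ η : W),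
      inn (g • m) (coAd g ξ) (coAd g η) = inn m ξ η)
    -- the pointwise dual μ* of μ
    (μstar : M → E')
    (hμstar : ∀ (m : M) (ξ : W), inn m (μ m) ξ = pair ξ (μstar m))
    -- the vector field X₁^ℋ, defined by d₁ℋ = ω(X₁^ℋ, −)
    (X₁ : ∀ m : M, TangentSpace I m)
    (hX₁ : ∀ (m : M) (v : TangentSpace I m),
      mfderiv I 𝓘(ℝ, ℝ) (fun m' => inn m (μ m') (μ m')) m v = ω m (X₁ m) v) :
    -- Crit₁(ℋ) = {m : μ*(m) ∈ 𝔤_m}, and μ⁻¹(0) ∪ M^G ⊆ Crit₁(ℋ)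
    {m : M | X₁ m = 0}
        = {m : M | mfderiv I' I (fun g : G => g • m) 1 (μstar m) = 0}
      ∧ ({m : M | μ m = 0} ∪ {m : M | ∀ g : G, g • m = m}) ⊆ {m : M | X₁ m = 0} := by

  -- Key identity: `X₁ m = 2 • (μ*(m))^M_m`.
  have key : ∀ m : M, X₁ m = (2:ℝ) • mfderiv I' I (fun g : G => g • m) 1 (μstar m) := by
    intro m
    set V : TangentSpace I m := mfderiv I' I (fun g : G => g • m) 1 (μstar m) with hV
    set B : W →L[ℝ] W →L[ℝ] ℝ := inn m with hB
    have hμd : MDifferentiableAt I 𝓘(ℝ, W) μ m := (hμsmooth m).mdifferentiableAt (by simp)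
    set D : TangentSpace I m →L[ℝ] W := mfderiv I 𝓘(ℝ, W) μ m with hD
    -- derivative of the quadratic form w ↦ B w w at μ m
    have hdiag : HasFDerivAt (fun w : W => (w, w))
        ((ContinuousLinearMap.id ℝ W).prod (ContinuousLinearMap.id ℝ W)) (μ m) :=
      ((ContinuousLinearMap.id ℝ W).prod (ContinuousLinearMap.id ℝ W)).hasFDerivAt
    have hbil := B.isBoundedBilinearMap.hasFDerivAt (μ m, μ m)
    have hQ : HasFDerivAt (fun w : W => B w w)
        ((B.isBoundedBilinearMap.deriv (μ m, μ m)).comp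
          ((ContinuousLinearMap.id ℝ W).prod (ContinuousLinearMap.id ℝ W))) (μ m) :=
      HasFDerivAt.comp (f := fun w : W => (w, w)) (μ m) hbil hdiag
    have hfd : mfderiv I 𝓘(ℝ, ℝ) (fun m' => B (μ m') (μ m')) m
        = ((B.isBoundedBilinearMap.deriv (μ m, μ m)).comp
            ((ContinuousLinearMap.id ℝ W).prod (ContinuousLinearMap.id ℝ W))).comp D := by
      have hcomp : (fun m' => B (μ m') (μ m')) = (fun w : W => B w w) ∘ μ := rfl
      rw [hcomp, mfderiv_comp m (hQ.differentiableAt.mdifferentiableAt) hμd,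
        mfderiv_eq_fderiv, hQ.fderiv]
      rfl
    have hpd : mfderiv I 𝓘(ℝ, ℝ) (fun m' => pair (μ m') (μstar m)) m
        = (pair.flip (μstar m)).comp D := by
      have hcomp : (fun m' => pair (μ m') (μstar m)) = (fun w : W => pair.flip (μstar m) w) ∘ μ := rfl
      have hL : HasFDerivAt (fun w : W => pair.flip (μstar m) w) (pair.flip (μstar m)) (μ m) :=
        (pair.flip (μstar m)).hasFDerivAt
      rw [hcomp, mfderiv_comp m (hL.differentiableAt.mdifferentiableAt) hμd,
        mfderiv_eq_fderiv, hL.fderiv]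
      rfl
    -- pointwise comparison via ω
    have hω : ∀ v : TangentSpace I m, ω m (X₁ m) v = ω m ((2:ℝ) • V) v := by
      intro v
      have h1 : ω m (X₁ m) v = B (μ m) (D v) + B (D v) (μ m) := by
        rw [← hX₁ m v, hfd]
        exact B.isBoundedBilinearMap.deriv_apply (μ m, μ m) (D v, D v)
      have h2 : ω m ((2:ℝ) • V) v = 2 * pair (D v) (μstar m) := by
        have := hmom (μstar m) m v
        rw [hpd] at this
        rw [map_smul, ContinuousLinearMap.smul_apply, ← this]
        rfl
      rw [h1, h2, hsymm m (D v) (μ m), hμstar m (D v)]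
      ring
    have hzero : X₁ m - (2:ℝ) • V = 0 := by
      apply hnondeg m
      intro w
      rw [map_sub, ContinuousLinearMap.sub_apply, hω w, sub_self]
    have := sub_eq_zero.mp hzero
    exact this
  constructor
  · ext m
    simp only [Set.mem_setOf_eq, key m, smul_eq_zero]
    have h2 : ∀ v : E, (2:ℝ) • v = 0 ↔ v = 0 := fun v => smul_eq_zero_iff_right two_ne_zero
    exact h2 _
  · rintro m (hm | hm)
    · -- μ m = 0 case
      have hst : μstar m = 0 := by
        apply hpair'
        intro ξ
        rw [← hμstar m ξ]
        simp only [Set.mem_setOf_eq] at hm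
        rw [hm]
        simp
      simp only [Set.mem_setOf_eq, key m, hst, map_zero, smul_zero]
      have h0 : ∀ v : E, v = 0 → (2:ℝ) • v = 0 := fun v hv => by rw [hv, smul_zero]
      exact h0 _ (map_zero _)
    · -- fixed point case
      have hconst : (fun g : G => g • m) = fun _ : G => m := funext hm
      have hL0 : mfderiv I' I (fun g : G => g • m) 1 = 0 := by
        rw [hconst]; exact mfderiv_const
      have hV0 : mfderiv I' I (fun g : G => g • m) 1 (μstar m) = 0 := by
        rw [hL0]; rfl
      simp only [Set.mem_setOf_eq, key m, hV0, smul_zero]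
      rfl
end

section
/- Let (M, ω) be symplectic with Hamiltonian G-action, μ the momentum map, a family of inner products on 𝔤* with orthonormal frame h_j, dual frame h_j* of M × 𝔤 and μ_j = ⟨μ, h_j*⟩ the components of μ. Then the gradient of μ_j with respect to the metric ω(−, J−) satisfies grad μ_j = J V_j + ⟨μ, Th_j*⟩*, where V_j(m) = (h_j*(m))^M_m, ⟨μ, Th_j*⟩ is the one-form m ↦ (v ↦ ⟨μ(m), T_m h_j*(v)⟩), and * denotes the metric dual vector field. -/
open Manifold

private lemma mfderiv_prod_module
    {E : Type*} [NormedAddCommGroup E] [NormedSpace ℝ E]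
    {H : Type*} [TopologicalSpace H] {I : ModelWithCorners ℝ E H}
    {M : Type*} [TopologicalSpace M] [ChartedSpace H M] [IsManifold I (⊤ : ℕ∞) M]
    {F₁ F₂ : Type*} [NormedAddCommGroup F₁] [NormedSpace ℝ F₁]
    [NormedAddCommGroup F₂] [NormedSpace ℝ F₂]
    {f : M → F₁} {g : M → F₂} {x : M}
    (hf : MDifferentiableAt I 𝓘(ℝ, F₁) f x) (hg : MDifferentiableAt I 𝓘(ℝ, F₂) g x) :
    mfderiv I 𝓘(ℝ, F₁ × F₂) (fun x => (f x, g x)) x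
      = (mfderiv I 𝓘(ℝ, F₁) f x).prod (mfderiv I 𝓘(ℝ, F₂) g x) := by
  rw [modelWithCornersSelf_prod, ← chartedSpaceSelf_prod]
  exact hf.mfderiv_prod hg

private lemma mfderiv_pair_rule
    {E : Type*} [NormedAddCommGroup E] [NormedSpace ℝ E]
    {H : Type*} [TopologicalSpace H] {I : ModelWithCorners ℝ E H}
    {M : Type*} [TopologicalSpace M] [ChartedSpace H M] [IsManifold I (⊤ : ℕ∞) M]
    {W E' : Type*} [NormedAddCommGroup W] [NormedSpace ℝ W]
    [NormedAddCommGroup E'] [NormedSpace ℝ E']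
    (pair : W →L[ℝ] E' →L[ℝ] ℝ)
    {f : M → W} {g : M → E'} {m : M}
    (hf : MDifferentiableAt I 𝓘(ℝ, W) f m) (hg : MDifferentiableAt I 𝓘(ℝ, E') g m)
    (v : TangentSpace I m) :
    mfderiv I 𝓘(ℝ, ℝ) (fun x => pair (f x) (g x)) m v
      = pair (mfderiv I 𝓘(ℝ, W) f m v) (g m) + pair (f m) (mfderiv I 𝓘(ℝ, E') g m v) := by
  have hB : MDifferentiableAt 𝓘(ℝ, W × E') 𝓘(ℝ, ℝ)
      (fun p : W × E' => pair p.1 p.2) (f m, g m) :=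
    (pair.isBoundedBilinearMap.differentiableAt _).mdifferentiableAt
  have hfg : MDifferentiableAt I 𝓘(ℝ, W × E') (fun x => (f x, g x)) m := hf.prodMk_space hg
  have hcomp : mfderiv I 𝓘(ℝ, ℝ) ((fun p : W × E' => pair p.1 p.2) ∘ (fun x => (f x, g x))) m
      = (mfderiv 𝓘(ℝ, W × E') 𝓘(ℝ, ℝ) (fun p : W × E' => pair p.1 p.2) (f m, g m)).comp
        (mfderiv I 𝓘(ℝ, W × E') (fun x => (f x, g x)) m) := mfderiv_comp m hB hfg
  have heq : (fun x => pair (f x) (g x))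
      = (fun p : W × E' => pair p.1 p.2) ∘ (fun x => (f x, g x)) := rfl
  rw [heq, hcomp, mfderiv_prod_module hf hg, mfderiv_eq_fderiv,
    pair.isBoundedBilinearMap.fderiv]
  exact add_comm _ _


/-- Let `(M, ω)` be symplectic with Hamiltonian `G`-action, `μ` the momentum
map, a family of inner products on `𝔤*` with orthonormal frame element `h_j`, dual frame
element `h_j* : M → 𝔤` (so that `(h_j(m), ξ)_m = ⟨ξ, h_j*(m)⟩`), and `μ_j = ⟨μ, h_j*⟩`.
Let `J` be an `ω`-compatible almost complex structure, so that `g = ω(−, J−)` is a Riemannian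
metric.  Then the gradient of `μ_j` with respect to `g` satisfies
`grad μ_j = J V_j + ⟨μ, Th_j*⟩*`,
where `V_j(m) = (h_j*(m))^M_m`, `⟨μ, Th_j*⟩` is the one-form `v ↦ ⟨μ(m), T_m h_j*(v)⟩`, and
`*` denotes the metric dual vector field. -/
theorem statement17
    {E : Type*} [NormedAddCommGroup E] [NormedSpace ℝ E]
    {H : Type*} [TopologicalSpace H] (I : ModelWithCorners ℝ E H)
    {M : Type*} [TopologicalSpace M] [ChartedSpace H M] [IsManifold I (⊤ : ℕ∞) M]
    {E' : Type*} [NormedAddCommGroup E'] [NormedSpace ℝ E']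
    {H' : Type*} [TopologicalSpace H'] (I' : ModelWithCorners ℝ E' H')
    {G : Type*} [TopologicalSpace G] [ChartedSpace H' G] [Group G] [LieGroup I' (⊤ : ℕ∞) G]
    [MulAction G M]
    (hact : ContMDiff (I'.prod I) I (⊤ : ℕ∞) (fun p : G × M => p.1 • p.2))
    -- 𝔤* with its duality pairing with 𝔤 = E'
    {W : Type*} [NormedAddCommGroup W] [NormedSpace ℝ W]
    (pair : W →L[ℝ] E' →L[ℝ] ℝ)
    (hpair : Function.Injective pair)
    -- the symplectic form ω and a compatible almost complex structure J;
    -- g := ω(−, J−) is a Riemannian metric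
    (ω : ∀ m : M, TangentSpace I m →L[ℝ] TangentSpace I m →L[ℝ] ℝ)
    (hanti : ∀ (m : M) (v w : TangentSpace I m), ω m v w = - ω m w v)
    (hnondeg : ∀ (m : M) (v : TangentSpace I m), (∀ w, ω m v w = 0) → v = 0)
    (J : ∀ m : M, TangentSpace I m →L[ℝ] TangentSpace I m)
    (hJ2 : ∀ (m : M) (v : TangentSpace I m), J m (J m v) = -v)
    (hgsymm : ∀ (m : M) (v w : TangentSpace I m), ω m v (J m w) = ω m w (J m v))
    (hgpos : ∀ (m : M) (v : TangentSpace I m), v ≠ 0 → 0 < ω m v (J m v))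
    -- the momentum map, satisfying dμ_X = ω(X^M, −)
    (μ : M → W)
    (hμsmooth : ContMDiff I 𝓘(ℝ, W) (⊤ : ℕ∞) μ)
    (hmom : ∀ (X : E') (m : M) (v : TangentSpace I m),
      mfderiv I 𝓘(ℝ, ℝ) (fun m' => pair (μ m') X) m v
        = ω m (mfderiv I' I (fun g : G => g • m) 1 X) v)
    -- the family of inner products, the frame element h_j and its dual h_j*
    (inn : M → (W →L[ℝ] W →L[ℝ] ℝ))
    (hsymm : ∀ (m : M) (ξ η : W), inn m ξ η = inn m η ξ)
    (hposdef : ∀ (m : M) (ξ : W), ξ ≠ 0 → 0 < inn m ξ ξ)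
    (h : M → W) (hstar : M → E')
    (hhsmooth : ContMDiff I 𝓘(ℝ, W) (⊤ : ℕ∞) h) (hhstarsmooth : ContMDiff I 𝓘(ℝ, E') (⊤ : ℕ∞) hstar)
    (hhstar : ∀ (m : M) (ξ : W), inn m (h m) ξ = pair ξ (hstar m))
    -- the component μ_j = ⟨μ, h_j*⟩
    (μj : M → ℝ) (hμj : ∀ m, μj m = pair (μ m) (hstar m))
    -- grad μ_j, defined by g(grad μ_j, −) = dμ_j
    (gradμj : ∀ m : M, TangentSpace I m)
    (hgrad : ∀ (m : M) (v : TangentSpace I m),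
      mfderiv I 𝓘(ℝ, ℝ) μj m v = ω m (gradμj m) (J m v))
    -- the metric dual ⟨μ, Th_j*⟩* of the one-form ⟨μ, Th_j*⟩ : v ↦ ⟨μ(m), T_m h_j*(v)⟩
    (αstar : ∀ m : M, TangentSpace I m)
    (hαstar : ∀ (m : M) (v : TangentSpace I m),
      pair (μ m) (mfderiv I 𝓘(ℝ, E') hstar m v) = ω m (αstar m) (J m v)) :
    -- conclusion: grad μ_j = J V_j + ⟨μ, Th_j*⟩*, with V_j(m) = (h_j*(m))^M_m
    ∀ m : M,
      gradμj m = J m (mfderiv I' I (fun g : G => g • m) 1 (hstar m)) + αstar m := by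
  intro m
  set V : TangentSpace I m := mfderiv I' I (fun g : G => g • m) 1 (hstar m) with hV
  have hμd : MDifferentiableAt I 𝓘(ℝ, W) μ m := hμsmooth.mdifferentiableAt (by simp)
  have hhd : MDifferentiableAt I 𝓘(ℝ, E') hstar m := hhstarsmooth.mdifferentiableAt (by simp)
  have hdμj : ∀ v : TangentSpace I m,
      mfderiv I 𝓘(ℝ, ℝ) μj m v = ω m V v + ω m (αstar m) (J m v) := by
    intro v
    have h1 : μj = fun x => pair (μ x) (hstar x) := funext hμj
    rw [h1, mfderiv_pair_rule pair hμd hhd v]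
    congr 1
    · have h3 := hmom (hstar m) m v
      have h4 : mfderiv I 𝓘(ℝ, ℝ) (fun m' => pair (μ m') (hstar m)) m v
          = pair ((mfderiv I 𝓘(ℝ, W) μ m) v) (hstar m) := by
        have heq2 : (fun m' => pair (μ m') (hstar m)) = (pair.flip (hstar m)) ∘ μ := rfl
        rw [heq2, mfderiv_comp m
          ((pair.flip (hstar m)).differentiableAt.mdifferentiableAt) hμd,
          ContinuousLinearMap.mfderiv_eq]
        rfl
      rw [← h4, h3]
    · exact hαstar m v
  have h5 : ∀ v : TangentSpace I m, ω m (J m V) (J m v) = ω m V v := by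
    intro v
    calc ω m (J m V) (J m v) = ω m v (J m (J m V)) := hgsymm m (J m V) v
      _ = ω m v (-V) := by rw [hJ2]
      _ = -(ω m v V) := map_neg _ _
      _ = ω m V v := by rw [hanti m v V, neg_neg]
  have key : ∀ v : TangentSpace I m,
      ω m (gradμj m) (J m v) = ω m (J m V + αstar m) (J m v) := by
    intro v
    rw [← hgrad m v, hdμj v, map_add, ContinuousLinearMap.add_apply]
    congr 1
    exact (h5 v).symm
  have hzero : ∀ w : TangentSpace I m, ω m (gradμj m - (J m V + αstar m)) w = 0 := by
    intro w
    have hw : J m (-(J m w)) = w := by rw [map_neg, hJ2, neg_neg]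
    have hk := key (-(J m w))
    rw [hw] at hk
    rw [map_sub, ContinuousLinearMap.sub_apply, hk, sub_self]
  have hfin := hnondeg m _ hzero
  exact sub_eq_zero.mp hfin
end
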